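/- arXiv:1710.01036 — 6 statements merged into one kernel-verified Lean document; each statement's English description precedes it below -/
import Mathlib

section
/- Let p be an odd prime, r ≥ 1 an integer, q = p^r, and let k, j be integers with k > q+3, 0 ≤ j ≤ q−2, j+(q−1) ≤ k−2, and k−2 < j+2(q−1). Set α = C(k−2−j, j), β = C(k−1−j−q, j), and γ = C(k−2−j, q−1) + (−1)^{j+1}·C(k−2−j, j+q−1) as integers. Let K be an algebraic closure of the rational function field F_p(t), t the image in K of the indeterminate, and let ᾱ, β̄, γ̄ ∈ K denote the images of α, β, γ under reduction modulo p. Then the 2×2 matrix M = [[(−1)^j·ᾱ·t^{j+1}, −γ̄·t^{j+q}], [(−1)^j·β̄·t^{j+1}, 0]] is diagonalizable over K. -/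
open Matrix

/-- A square matrix over a commutative ring is diagonalizable if it is conjugate,
by an invertible matrix, to a diagonal matrix. -/
def Matrix.IsDiagonalizable {n R : Type*} [Fintype n] [DecidableEq n] [CommRing R]
    (M : Matrix n n R) : Prop :=
  ∃ P : Matrix n n R, IsUnit P ∧ (P⁻¹ * M * P).IsDiag



section helpers
variable {p : ℕ} [Fact p.Prime]

lemma myChoose_p_sub_one (x : ℕ) (hx : x < p) : (((p-1).choose x : ℕ) : ZMod p) ≠ 0 := by
  induction x with
  | zero => simp
  | succ y ih =>
    have hy := ih (by omega)
    have key := Nat.choose_succ_right_eq (p-1) y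
    have hcast : (((p-1).choose (y+1) : ℕ) : ZMod p) * ((y+1 : ℕ) : ZMod p)
        = (((p-1).choose y : ℕ) : ZMod p) * (((p-1-y : ℕ)) : ZMod p) := by
      exact_mod_cast congrArg (Nat.cast : ℕ → ZMod p) key
    intro h0
    rw [h0, zero_mul] at hcast
    have h1 : (((p-1-y : ℕ)) : ZMod p) ≠ 0 := by
      rw [Ne, ZMod.natCast_eq_zero_iff]
      intro hdvd
      have hppos : 0 < p := (Fact.out : p.Prime).pos
      have : p - 1 - y = 0 ∨ p ≤ p - 1 - y := by
        rcases Nat.eq_zero_or_pos (p-1-y) with h | h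
        · exact Or.inl h
        · exact Or.inr (Nat.le_of_dvd h hdvd)
      omega
    rcases mul_eq_zero.mp hcast.symm with h | h
    · exact hy h
    · exact h1 h

lemma myChoose_pow_sub_one (r : ℕ) : ∀ j : ℕ, j < p^r → (((p^r-1).choose j : ℕ) : ZMod p) ≠ 0 := by
  induction r with
  | zero =>
    intro j hj
    have : j = 0 := by simpa using Nat.lt_one_iff.mp (by simpa using hj)
    subst this; simp
  | succ r ih =>
    intro j hj
    have hp : 1 < p := (Fact.out : p.Prime).one_lt
    have hP : 1 ≤ p ^ r := Nat.one_le_pow _ _ (by omega)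
    have e1 : p^(r+1) = p*p^r := by rw [pow_succ]; ring
    have e2 : p*(p^r-1) = p*p^r - p := by rw [Nat.mul_sub, mul_one]
    have e3 : p ≤ p*p^r := by calc p = p*1 := (mul_one p).symm
                                  _ ≤ p*p^r := Nat.mul_le_mul_left p hP
    have h1 : p^(r+1) - 1 = p * (p^r - 1) + (p - 1) := by omega
    have hmod : (p^(r+1) - 1) % p = p - 1 := by
      rw [h1, Nat.mul_add_mod, Nat.mod_eq_of_lt (by omega)]
    have hdiv : (p^(r+1) - 1) / p = p^r - 1 := by
      rw [h1, Nat.mul_add_div (by omega), Nat.div_eq_of_lt (by omega), add_zero]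
    have key := (ZMod.intCast_eq_intCast_iff _ _ _).mpr
      (Choose.choose_modEq_choose_mod_mul_choose_div (p := p) (n := p^(r+1)-1) (k := j))
    push_cast at key
    rw [hmod, hdiv] at key
    rw [key]
    apply mul_ne_zero
    · exact myChoose_p_sub_one _ (Nat.mod_lt _ (by omega))
    · exact ih _ (Nat.div_lt_of_lt_mul (by rw [← pow_succ']; exact hj))

lemma myLucas (r e f s u : ℕ) (hs : s < p^r) (hu : u < p^r) :
    (((p^r*e+s).choose (p^r*f+u) : ℕ) : ZMod p)
      = ((e.choose f : ℕ) : ZMod p) * ((s.choose u : ℕ) : ZMod p) := by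
  have hp : 1 < p := (Fact.out : p.Prime).one_lt
  have h1 := (ZMod.intCast_eq_intCast_iff _ _ _).mpr
    (Choose.choose_modEq_choose_mul_prod_range_choose (p := p) (n := p^r*e+s) (k := p^r*f+u) r)
  have h2 := (ZMod.intCast_eq_intCast_iff _ _ _).mpr
    (Choose.choose_modEq_choose_mul_prod_range_choose (p := p) (n := s) (k := u) r)
  push_cast at h1 h2
  have hd1 : (p^r*e+s)/p^r = e := by
    rw [Nat.mul_add_div (by positivity), Nat.div_eq_of_lt hs, add_zero]
  have hd2 : (p^r*f+u)/p^r = f := by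
    rw [Nat.mul_add_div (by positivity), Nat.div_eq_of_lt hu, add_zero]
  rw [hd1, hd2] at h1
  rw [Nat.div_eq_of_lt hs, Nat.div_eq_of_lt hu] at h2
  simp only [Nat.choose_self, Nat.cast_one, one_mul] at h2
  have hkey : ∀ x y i : ℕ, i < r → (p^r*x+y)/p^i % p = y/p^i % p := by
    intro x y i hir
    have e1 : p^i * (p*(p^(r-i-1)*x)) = p^r*x := by
      calc p^i * (p*(p^(r-i-1)*x)) = (p^i*p^1*p^(r-i-1))*x := by ring
        _ = p^r * x := by rw [← pow_add, ← pow_add]; congr 2; omega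
    rw [← e1, Nat.mul_add_div (by positivity), Nat.mul_add_mod]
  have hprod : ∀ i ∈ Finset.range r,
      ((((p^r*e+s)/p^i % p).choose ((p^r*f+u)/p^i % p) : ℕ) : ZMod p)
      = (((s/p^i % p).choose (u/p^i % p) : ℕ) : ZMod p) := by
    intro i hi
    rw [hkey e s i (Finset.mem_range.mp hi), hkey f u i (Finset.mem_range.mp hi)]
  rw [Finset.prod_congr rfl hprod] at h1
  rw [h1, h2]
end helpers

section mat
variable {K : Type*} [Field K]

lemma diag_aux (M P D : Matrix (Fin 2) (Fin 2) K) (hP : IsUnit P.det) (hD : D.IsDiag)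
    (h : M * P = P * D) : M.IsDiagonalizable := by
  refine ⟨P, (Matrix.isUnit_iff_isUnit_det P).mpr hP, ?_⟩
  rw [mul_assoc, h, ← mul_assoc, Matrix.nonsing_inv_mul P hP, one_mul]
  exact hD

lemma diag_two (a b c d : K) (hc : c ≠ 0) (hd : d ≠ 0) (h2 : (2:K) ≠ 0)
    (hsq : d^2 = a^2 + 4*b*c) : (!![a, b; c, 0]).IsDiagonalizable := by
  apply diag_aux _ !![(a+d)/2, (a-d)/2; c, c] (Matrix.diagonal ![(a+d)/2, (a-d)/2])
  · rw [Matrix.det_fin_two_of]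
    have : (a+d)/2 * c - (a-d)/2 * c = d * c := by field_simp; ring
    rw [this]
    exact (mul_ne_zero hd hc).isUnit
  · exact Matrix.isDiag_diagonal _
  · ext i j
    fin_cases i <;> fin_cases j <;>
      simp [Matrix.mul_apply, Fin.sum_univ_two, Matrix.diagonal] <;>
      field_simp <;>
      first
        | ring1
        | linear_combination hsq
        | linear_combination -hsq
        | linear_combination 2*hsq
        | linear_combination -2*hsq
        | linear_combination 3*hsq
        | linear_combination -3*hsq
        | linear_combination 4*hsq
        | linear_combination -4*hsq
end mat

section mat2
variable {K : Type*} [Field K]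

lemma diag_tri (a b : K) (ha : a ≠ 0) : (!![a, b; 0, 0]).IsDiagonalizable := by
  apply diag_aux _ !![a, -b; 0, a] (Matrix.diagonal ![a, 0])
  · rw [Matrix.det_fin_two_of]
    simpa using (mul_ne_zero ha ha).isUnit
  · exact Matrix.isDiag_diagonal _
  · ext i j
    fin_cases i <;> fin_cases j <;>
      simp [Matrix.mul_apply, Fin.sum_univ_two, Matrix.diagonal] <;> ring

lemma diag_zero : (0 : Matrix (Fin 2) (Fin 2) K).IsDiagonalizable :=
  ⟨1, isUnit_one, by simp⟩
end mat2

section trans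
variable {p : ℕ} [Fact p.Prime]

lemma transc (K : Type*) [Field K] [Algebra (RatFunc (ZMod p)) K]
    [CharP K p]
    (t : K) (ht : t = algebraMap (RatFunc (ZMod p)) K RatFunc.X)
    (x y : ZMod p) (n : ℕ) (hn : 1 ≤ n)
    (h : (ZMod.castHom dvd_rfl K) x = (ZMod.castHom dvd_rfl K) y * t ^ n) :
    x = 0 ∧ y = 0 := by
  set g : ZMod p →+* K :=
    ((algebraMap (RatFunc (ZMod p)) K).comp
      (algebraMap (Polynomial (ZMod p)) (RatFunc (ZMod p)))).comp (Polynomial.C) with hg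
  have hfg : (ZMod.castHom dvd_rfl K : ZMod p →+* K) = g := Subsingleton.elim _ _
  rw [hfg] at h
  have ht' : t ^ n = algebraMap (RatFunc (ZMod p)) K
      (algebraMap (Polynomial (ZMod p)) (RatFunc (ZMod p)) (Polynomial.X ^ n)) := by
    rw [ht, map_pow, map_pow, RatFunc.algebraMap_X]
  rw [ht', hg] at h
  simp only [RingHom.comp_apply] at h
  rw [← _root_.map_mul, ← _root_.map_mul] at h
  have h1 := (algebraMap (RatFunc (ZMod p)) K).injective h
  have h2 := RatFunc.algebraMap_injective (ZMod p) h1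
  -- h2 : Polynomial.C x = Polynomial.C y * Polynomial.X ^ n
  have hy : y = 0 := by
    have := congrArg (fun q => Polynomial.coeff q n) h2
    simp only [Polynomial.coeff_C, Polynomial.coeff_C_mul, Polynomial.coeff_X_pow, if_pos rfl,
      mul_one, if_neg (by omega : ¬ n = 0), if_true] at this
    simpa using this.symm
  refine ⟨?_, hy⟩
  rw [hy] at h2
  simpa using Polynomial.C_injective (by simpa using h2 : Polynomial.C x = Polynomial.C 0)
end trans

/-- In odd characteristic, for `k > q + 3`, any two-element class `C_j` gives a
diagonalizable block `M_j` of the Atkin operator `U_t`. -/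
theorem stmt0 (p r : ℕ) [Fact p.Prime] (hodd : Odd p) (hr : 1 ≤ r)
    (q : ℕ) (hq : q = p ^ r)
    (k j : ℕ) (hk : q + 3 < k) (hj : j ≤ q - 2)
    (hjk : j + (q - 1) ≤ k - 2) (hjk' : k - 2 < j + 2 * (q - 1))
    (α β γ : ℤ)
    (hα : α = (k - 2 - j).choose j)
    (hβ : β = (k - 1 - j - q).choose j)
    (hγ : γ = (k - 2 - j).choose (q - 1) + (-1) ^ (j + 1) * (k - 2 - j).choose (j + q - 1))
    (K : Type*) [Field K] [Algebra (RatFunc (ZMod p)) K] [IsAlgClosure (RatFunc (ZMod p)) K]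
    (t : K) (ht : t = algebraMap (RatFunc (ZMod p)) K RatFunc.X) :
    Matrix.IsDiagonalizable
      !![(-1 : K) ^ j * (α : K) * t ^ (j + 1), -(γ : K) * t ^ (j + q);
         (-1 : K) ^ j * (β : K) * t ^ (j + 1), 0] := by
  have hprime : p.Prime := Fact.out
  have hp2 : p ≠ 2 := by rintro rfl; exact (by decide : ¬ Odd 2) hodd
  have hp3 : 3 ≤ p := by have := hprime.two_le; omega
  have hq3 : 3 ≤ q := by
    have : p ≤ p ^ r := Nat.le_self_pow (by omega) p
    omega
  -- arithmetic set-up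
  set n : ℕ := k - 2 - j with hn
  set m : ℕ := k - 1 - j - q with hm
  have hnm : n = (q - 1) + m := by omega
  have hmq : m < q - 1 := by omega
  have hjq : j < q := by omega
  -- the key mod-p fact
  have NK : (α : ZMod p) = 0 → ((β : ZMod p) = 0 ↔ (γ : ZMod p) = 0) := by
    intro hA0
    rcases Nat.eq_zero_or_pos j with hj0 | hj1
    · exfalso
      rw [hα, hj0] at hA0
      simp at hA0
    rcases Nat.eq_zero_or_pos m with hm0 | hm1
    · exfalso
      have hn' : n = q - 1 := by omega
      rw [hα, hn'] at hA0
      have hA0' : (((q-1).choose j : ℕ) : ZMod p) = 0 := by exact_mod_cast hA0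
      rw [hq] at hA0' hjq
      exact myChoose_pow_sub_one r j hjq hA0'
    -- main case : j ≥ 1, m ≥ 1
    have hmq' : m - 1 < p ^ r := by omega
    have hjq' : j < p ^ r := by omega
    have hjq'' : j - 1 < p ^ r := by omega
    have hq1 : q - 1 < p ^ r := by omega
    have hA' : ((n.choose j : ℕ) : ZMod p) = (((m-1).choose j : ℕ) : ZMod p) := by
      have e : n.choose j = (p^r*1 + (m-1)).choose (p^r*0 + j) := by congr 1 <;> omega
      rw [e, myLucas r 1 0 (m-1) j hmq' hjq']
      simp
    have hG1 : ((n.choose (q-1) : ℕ) : ZMod p) = 0 := by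
      have e : n.choose (q-1) = (p^r*1 + (m-1)).choose (p^r*0 + (q-1)) := by congr 1 <;> omega
      rw [e, myLucas r 1 0 (m-1) (q-1) hmq' hq1]
      rw [Nat.choose_eq_zero_of_lt (by omega : m - 1 < q - 1)]
      simp
    have hG2 : ((n.choose (j+q-1) : ℕ) : ZMod p) = (((m-1).choose (j-1) : ℕ) : ZMod p) := by
      have e : n.choose (j+q-1) = (p^r*1 + (m-1)).choose (p^r*1 + (j-1)) := by congr 1 <;> omega
      rw [e, myLucas r 1 1 (m-1) (j-1) hmq' hjq'']
      simp
    have hBp : m.choose j = (m-1).choose (j-1) + (m-1).choose j := by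
      have h := Nat.choose_succ_succ (m-1) (j-1)
      simp only [Nat.succ_eq_add_one] at h
      rwa [show m-1+1 = m from by omega, show j-1+1 = j from by omega] at h
    -- convert everything to ZMod p
    have hAz : ((α : ZMod p)) = (((m-1).choose j : ℕ) : ZMod p) := by
      rw [hα]; push_cast; exact_mod_cast hA'
    have hBz : ((β : ZMod p)) = (((m-1).choose (j-1) : ℕ) : ZMod p)
        + (((m-1).choose j : ℕ) : ZMod p) := by
      rw [hβ]; push_cast [← hm, hBp]; ring
    have hGz : ((γ : ZMod p)) = (-1)^(j+1) * (((m-1).choose (j-1) : ℕ) : ZMod p) := by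
      rw [hγ]; push_cast [← hn]
      rw [show ((n.choose (q-1) : ℕ) : ZMod p) = 0 from hG1,
        show ((n.choose (j+q-1) : ℕ) : ZMod p) = (((m-1).choose (j-1) : ℕ) : ZMod p) from hG2]
      ring
    rw [hAz] at hA0
    rw [hBz, hGz, hA0, add_zero]
    constructor
    · intro h; rw [h, mul_zero]
    · intro h
      rcases mul_eq_zero.mp h with h' | h'
      · exact absurd h' (pow_ne_zero _ (by simp : (-1 : ZMod p) ≠ 0))
      · exact h'
  -- characteristic and field set-up
  haveI : CharP K p := by
    haveI : CharP (RatFunc (ZMod p)) p :=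
      charP_of_injective_algebraMap (RatFunc.algebraMap_injective (ZMod p)) p
    exact charP_of_injective_algebraMap (algebraMap (RatFunc (ZMod p)) K).injective p
  haveI : IsAlgClosed K := IsAlgClosure.isAlgClosed (RatFunc (ZMod p))
  have hcast : ∀ z : ℤ, ((z : K) = 0 ↔ (z : ZMod p) = 0) := by
    intro z
    rw [← map_intCast (ZMod.castHom (dvd_refl p) K) z]
    constructor
    · intro h
      exact (ZMod.castHom (dvd_refl p) K).injective (by simpa using h)
    · intro h
      rw [h, map_zero]
  have tne : t ≠ 0 := by
    rw [ht]
    intro h0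
    exact RatFunc.X_ne_zero ((algebraMap (RatFunc (ZMod p)) K).injective (by simpa using h0))
  have two_ne : (2 : K) ≠ 0 := by
    have h2 : ((2:ℕ) : K) ≠ 0 := by
      rw [Ne, CharP.cast_eq_zero_iff K p]
      intro hdvd; have := Nat.le_of_dvd (by norm_num) hdvd; omega
    exact_mod_cast h2
  have four_ne : ((4:ZMod p)) ≠ 0 := by
    have h4 : ((4:ℕ) : ZMod p) ≠ 0 := by
      rw [Ne, ZMod.natCast_eq_zero_iff]
      intro hdvd
      have h22 : (4:ℕ) = 2^2 := by norm_num
      have := hprime.dvd_of_dvd_pow (h22 ▸ hdvd)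
      have := Nat.le_of_dvd (by norm_num) this
      omega
    exact_mod_cast h4
  have tpow_ne : ∀ s : ℕ, t ^ s ≠ 0 := fun s => pow_ne_zero s tne
  have negpow_ne : ((-1:K)^j) ≠ 0 := pow_ne_zero _ (by simp)
  by_cases hB : (β : ZMod p) = 0
  · by_cases hA : (α : ZMod p) = 0
    · have hG : (γ : ZMod p) = 0 := (NK hA).mp hB
      have hAK : (α : K) = 0 := (hcast α).mpr hA
      have hBK : (β : K) = 0 := (hcast β).mpr hB
      have hGK : (γ : K) = 0 := (hcast γ).mpr hG
      have hM : !![(-1 : K) ^ j * (α : K) * t ^ (j + 1), -(γ : K) * t ^ (j + q);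
          (-1 : K) ^ j * (β : K) * t ^ (j + 1), 0] = 0 := by
        rw [hAK, hBK, hGK]
        ext i i'
        fin_cases i <;> fin_cases i' <;> simp
      rw [hM]; exact diag_zero
    · have hBK : (β : K) = 0 := (hcast β).mpr hB
      have hAKne : (α : K) ≠ 0 := fun h => hA ((hcast α).mp h)
      have hM : !![(-1 : K) ^ j * (α : K) * t ^ (j + 1), -(γ : K) * t ^ (j + q);
          (-1 : K) ^ j * (β : K) * t ^ (j + 1), 0]
          = !![(-1 : K) ^ j * (α : K) * t ^ (j + 1), -(γ : K) * t ^ (j + q); 0, 0] := by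
        rw [hBK]
        ext i i'
        fin_cases i <;> fin_cases i' <;> simp
      rw [hM]
      exact diag_tri _ _ (mul_ne_zero (mul_ne_zero negpow_ne hAKne) (tpow_ne _))
  · have hBKne : (β : K) ≠ 0 := fun h => hB ((hcast β).mp h)
    have hcne : (-1:K)^j * (β:K) * t^(j+1) ≠ 0 :=
      mul_ne_zero (mul_ne_zero negpow_ne hBKne) (tpow_ne _)
    have hdisc : ((-1 : K) ^ j * (α : K) * t ^ (j + 1))^2
        + 4 * (-(γ : K) * t ^ (j + q)) * ((-1:K)^j * (β:K) * t^(j+1)) ≠ 0 := by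
      by_cases hG : (γ : ZMod p) = 0
      · have hGK : (γ : K) = 0 := (hcast γ).mpr hG
        have hAne : (α : ZMod p) ≠ 0 := fun hA => hB ((NK hA).mpr hG)
        have hAKne : (α : K) ≠ 0 := fun h => hAne ((hcast α).mp h)
        rw [hGK]
        have e0 : ((-1:K)^j * (α:K) * t^(j+1))^2 + 4 * (-0 * t^(j+q)) * ((-1:K)^j*(β:K)*t^(j+1))
            = (((-1:K)^j * (α:K) * t^(j+1)))^2 := by ring
        rw [e0]
        exact pow_ne_zero _ (mul_ne_zero (mul_ne_zero negpow_ne hAKne) (tpow_ne _))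
      · have hGKne : (γ : K) ≠ 0 := fun h => hG ((hcast γ).mp h)
        intro h0
        obtain ⟨Q, hQ⟩ : ∃ Q, q = Q + 1 := ⟨q - 1, by omega⟩
        have hε : ((-1:K)^j)^2 = 1 := by
          rw [← pow_mul, mul_comm, pow_mul]; norm_num
        have E1 : (α:K)^2 * t^(2*j+2) = (4*(-1:K)^j*(β:K)*(γ:K)) * t^Q * t^(2*j+2) := by
          rw [hQ] at h0
          linear_combination h0 - (α:K)^2 * t^(2*j+2) * hε
        have E2 : (α:K)^2 = (4*(-1:K)^j*(β:K)*(γ:K)) * t^Q :=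
          mul_right_cancel₀ (tpow_ne _) E1
        have eX : (α:K)^2 = (ZMod.castHom (dvd_refl p) K) ((α : ZMod p)^2) := by
          rw [map_pow, map_intCast]
        have eY : (4*(-1:K)^j*(β:K)*(γ:K))
            = (ZMod.castHom (dvd_refl p) K) (4*(-1:ZMod p)^j*(β:ZMod p)*(γ:ZMod p)) := by
          simp [_root_.map_mul, map_pow, map_intCast, map_neg, _root_.map_one, map_ofNat]
        rw [eX, eY] at E2
        obtain ⟨_, hY⟩ := transc K t ht _ _ Q (by omega) E2
        rcases mul_eq_zero.mp hY with h' | h'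
        · rcases mul_eq_zero.mp h' with h'' | h''
          · rcases mul_eq_zero.mp h'' with h3 | h3
            · exact four_ne h3
            · exact pow_ne_zero _ (by simp : (-1:ZMod p) ≠ 0) h3
          · exact hB h''
        · exact hG h'
    obtain ⟨d, hd⟩ := IsAlgClosed.exists_pow_nat_eq
      (((-1:K)^j*(α:K)*t^(j+1))^2 + 4 * (-(γ:K)*t^(j+q)) * ((-1:K)^j*(β:K)*t^(j+1)))
      (n := 2) (by norm_num)
    have hdne : d ≠ 0 := fun h => hdisc (by rw [← hd, h]; ring)
    exact diag_two _ _ _ d hcne hdne two_ne hd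
end

section
/- Let r ≥ 1 be an integer, q = 2^r, and let k, j be integers with k > q+3, 0 ≤ j ≤ q−2, j+(q−1) ≤ k−2, and k−2 < j+2(q−1). Set α = C(k−2−j, j), β = C(k−1−j−q, j), and γ = C(k−2−j, q−1) + C(k−2−j, j+q−1) as integers. Let K be an algebraic closure of the rational function field F_2(t), t the image in K of the indeterminate, and let ᾱ, β̄, γ̄ ∈ K denote the images of α, β, γ under reduction modulo 2. Then the 2×2 matrix M = [[ᾱ·t^{j+1}, γ̄·t^{j+q}], [β̄·t^{j+1}, 0]] is diagonalizable over K if and only if α is odd or β is even. In particular, if k is even then M is diagonalizable over K. -/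
open Matrix

lemma lucas2 (n k : ℕ) :
    Nat.choose n k ≡ Nat.choose (n % 2) (k % 2) * Nat.choose (n / 2) (k / 2) [MOD 2] :=
  Choose.choose_modEq_choose_mod_mul_choose_div_nat

lemma lucas_pow (r : ℕ) (n k : ℕ) :
    Nat.choose n k ≡ Nat.choose (n % 2 ^ r) (k % 2 ^ r) * Nat.choose (n / 2 ^ r) (k / 2 ^ r) [MOD 2] := by
  induction r generalizing n k with
  | zero => simp [Nat.mod_one, Nat.ModEq.refl]
  | succ r ih =>
    have h1 : ∀ m : ℕ, m % 2 ^ (r + 1) % 2 = m % 2 := fun m =>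
      Nat.mod_mod_of_dvd m ⟨2 ^ r, by rw [pow_succ]; ring⟩
    have h2 : ∀ m : ℕ, m % 2 ^ (r + 1) / 2 = m / 2 % 2 ^ r := fun m => by
      rw [pow_succ, mul_comm, Nat.mod_mul_right_div_self]
    have h3 : ∀ m : ℕ, m / 2 / 2 ^ r = m / 2 ^ (r + 1) := fun m => by
      rw [Nat.div_div_eq_div_mul, pow_succ, mul_comm]
    calc Nat.choose n k
        ≡ Nat.choose (n % 2) (k % 2) * Nat.choose (n / 2) (k / 2) [MOD 2] := lucas2 n k
      _ ≡ Nat.choose (n % 2) (k % 2) * (Nat.choose (n / 2 % 2 ^ r) (k / 2 % 2 ^ r) *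
            Nat.choose (n / 2 / 2 ^ r) (k / 2 / 2 ^ r)) [MOD 2] := (Nat.ModEq.refl _).mul (ih _ _)
      _ = (Nat.choose (n % 2) (k % 2) * Nat.choose (n / 2 % 2 ^ r) (k / 2 % 2 ^ r)) *
            Nat.choose (n / 2 ^ (r + 1)) (k / 2 ^ (r + 1)) := by rw [h3, h3]; ring
      _ ≡ Nat.choose (n % 2 ^ (r + 1)) (k % 2 ^ (r + 1)) *
            Nat.choose (n / 2 ^ (r + 1)) (k / 2 ^ (r + 1)) [MOD 2] := by
          refine Nat.ModEq.mul ?_ (Nat.ModEq.refl _)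
          have := (lucas2 (n % 2 ^ (r + 1)) (k % 2 ^ (r + 1))).symm
          rwa [h1, h1, h2, h2] at this

lemma choose_pow_sub_one_odd (r j : ℕ) (hj : j < 2 ^ r) : Nat.choose (2 ^ r - 1) j % 2 = 1 := by
  induction r generalizing j with
  | zero => interval_cases j <;> simp
  | succ r ih =>
    have hstep := lucas2 (2 ^ (r + 1) - 1) j
    unfold Nat.ModEq at hstep
    have h2r : 0 < 2 ^ r := Nat.pow_pos (by norm_num)
    have he : 2 ^ (r + 1) - 1 = 2 * (2 ^ r - 1) + 1 := by rw [pow_succ]; omega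
    have h1 : (2 ^ (r + 1) - 1) % 2 = 1 := by omega
    have h2 : (2 ^ (r + 1) - 1) / 2 = 2 ^ r - 1 := by omega
    rw [h1, h2, Nat.mul_mod, ih (j / 2) (by omega)] at hstep
    have hj2 : j % 2 ≤ 1 := by omega
    interval_cases h : j % 2 <;> simp_all

lemma cA (r q m i : ℕ) (hq : q = 2 ^ r) (hm : m < q) (hi : i < q) :
    Nat.choose (q + m) i % 2 = Nat.choose m i % 2 := by
  have h : Nat.choose (q + m) i % 2
      = (Nat.choose ((q + m) % 2 ^ r) (i % 2 ^ r) * Nat.choose ((q + m) / 2 ^ r) (i / 2 ^ r)) % 2 :=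
    lucas_pow r (q + m) i
  rw [← hq] at h
  rw [h, Nat.add_comm q m, Nat.add_div_right _ (by omega), Nat.add_mod_right m q,
    Nat.mod_eq_of_lt hm, Nat.mod_eq_of_lt hi, Nat.div_eq_of_lt hm, Nat.div_eq_of_lt hi]
  simp

lemma cB (r q m i : ℕ) (hq : q = 2 ^ r) (hm : m < q) (hi : i < q) :
    Nat.choose (q + m) (q + i) % 2 = Nat.choose m i % 2 := by
  have h : Nat.choose (q + m) (q + i) % 2
      = (Nat.choose ((q + m) % 2 ^ r) ((q + i) % 2 ^ r)
          * Nat.choose ((q + m) / 2 ^ r) ((q + i) / 2 ^ r)) % 2 :=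
    lucas_pow r (q + m) (q + i)
  rw [← hq] at h
  rw [h, Nat.add_comm q m, Nat.add_comm q i,
    Nat.add_div_right _ (by omega), Nat.add_div_right _ (by omega),
    Nat.add_mod_right m q, Nat.add_mod_right i q,
    Nat.mod_eq_of_lt hm, Nat.mod_eq_of_lt hi, Nat.div_eq_of_lt hm, Nat.div_eq_of_lt hi]
  simp

lemma gamma_parity (r q k j : ℕ) (hr : 1 ≤ r) (hq : q = 2 ^ r) (hk : q + 3 < k)
    (hj : j ≤ q - 2) (hjk : j + (q - 1) ≤ k - 2) (hjk' : k - 2 < j + 2 * (q - 1)) :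
    ((k - 2 - j).choose (q - 1) + (k - 2 - j).choose (j + q - 1)) % 2
      = ((k - 2 - j).choose j + (k - 1 - j - q).choose j) % 2 := by
  have hq2 : 2 ≤ q := by rw [hq]; calc 2 = 2 ^ 1 := by norm_num
                                       _ ≤ 2 ^ r := Nat.pow_le_pow_right (by norm_num) hr
  set n := k - 2 - j with hn
  have hnq : q - 1 ≤ n := by omega
  have hnq' : n ≤ 2 * q - 3 := by omega
  have hb : k - 1 - j - q = n + 1 - q := by omega
  rw [hb]
  rcases Nat.lt_or_ge n q with hcase | hcase
  · -- n = q - 1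
    have hne : n = q - 1 := by omega
    have hβ0 : n + 1 - q = 0 := by omega
    have hα : n.choose j % 2 = 1 := by
      rw [hne, hq]; exact choose_pow_sub_one_odd r j (by omega)
    have hcs : n.choose (q - 1) = 1 := by rw [hne, Nat.choose_self]
    rcases Nat.eq_zero_or_pos j with hj0 | hj0
    · subst hj0
      simp only [hβ0, Nat.zero_add, Nat.choose_zero_right]
      omega
    · have hγ2 : n.choose (j + q - 1) = 0 := Nat.choose_eq_zero_of_lt (by omega)
      have hβ2 : (n + 1 - q).choose j = 0 := by
        rw [hβ0]; exact Nat.choose_eq_zero_of_lt (by omega)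
      omega
  · -- n = q + m
    set m := n - q with hm
    have hnm : n = q + m := by omega
    have hmq : m ≤ q - 3 := by omega
    have hβ : n + 1 - q = m + 1 := by omega
    have hα : n.choose j % 2 = m.choose j % 2 := by
      rw [hnm]; exact cA r q m j hq (by omega) (by omega)
    have hγ1 : n.choose (q - 1) % 2 = 0 := by
      rw [hnm, cA r q m (q - 1) hq (by omega) (by omega),
        Nat.choose_eq_zero_of_lt (by omega)]
    rcases Nat.eq_zero_or_pos j with hj0 | hj0
    · subst hj0
      have : n.choose (0 + q - 1) % 2 = 0 := by simpa using hγ1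
      simp only [Nat.choose_zero_right, hβ]
      omega
    · obtain ⟨i, rfl⟩ : ∃ i, j = i + 1 := ⟨j - 1, by omega⟩
      have hγ2 : n.choose (i + 1 + q - 1) % 2 = m.choose i % 2 := by
        have : i + 1 + q - 1 = q + i := by omega
        rw [this, hnm]; exact cB r q m i hq (by omega) (by omega)
      have hpas : (m + 1).choose (i + 1) = m.choose i + m.choose (i + 1) :=
        Nat.choose_succ_succ m i
      rw [hβ, hpas]
      omega

lemma evenk_lem (r q k j : ℕ) (hr : 1 ≤ r) (hq : q = 2 ^ r) (hk : q + 3 < k)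
    (hj : j ≤ q - 2) (hjk : j + (q - 1) ≤ k - 2) (hjk' : k - 2 < j + 2 * (q - 1))
    (hke : Even k) :
    (k - 2 - j).choose j % 2 = 1 ∨ (k - 1 - j - q).choose j % 2 = 0 := by
  have hq2 : 2 ≤ q := by rw [hq]; calc 2 = 2 ^ 1 := by norm_num
                                       _ ≤ 2 ^ r := Nat.pow_le_pow_right (by norm_num) hr
  have hqe : q % 2 = 0 := by
    have : (2 : ℕ) ∣ q := hq ▸ dvd_pow_self 2 (by omega)
    omega
  set n := k - 2 - j with hn
  have hnq : q - 1 ≤ n := by omega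
  have hnq' : n ≤ 2 * q - 3 := by omega
  have hb : k - 1 - j - q = n + 1 - q := by omega
  rw [hb]
  rcases Nat.lt_or_ge n q with hcase | hcase
  · left
    have hne : n = q - 1 := by omega
    rw [hne, hq]; exact choose_pow_sub_one_odd r j (by omega)
  · set m := n - q with hm
    have hnm : n = q + m := by omega
    have hmq : m ≤ q - 3 := by omega
    have hβ : n + 1 - q = m + 1 := by omega
    have hα : n.choose j % 2 = m.choose j % 2 := by
      rw [hnm]; exact cA r q m j hq (by omega) (by omega)
    -- m + j even
    have hmj : (m + j) % 2 = 0 := by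
      obtain ⟨u, hu⟩ := hke
      omega
    rcases Nat.eq_zero_or_pos j with hj0 | hj0
    · left; subst hj0; simpa using hα
    rcases Nat.eq_zero_or_pos (m.choose j % 2) with h0 | h1
    swap
    · left; omega
    right
    rw [hβ]
    obtain ⟨i, rfl⟩ : ∃ i, j = i + 1 := ⟨j - 1, by omega⟩
    have hpas : (m + 1).choose (i + 1) = m.choose i + m.choose (i + 1) :=
      Nat.choose_succ_succ m i
    -- show m.choose i % 2 = 0
    have hgoal : m.choose i % 2 = 0 := by
      rcases Nat.even_or_odd m with hme | hmo
      · -- m even, j = i+1 even, so i odd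
        have h2 : m.choose i % 2 = (Nat.choose (m % 2) (i % 2) * Nat.choose (m / 2) (i / 2)) % 2 :=
          lucas2 m i
        have hm2 : m % 2 = 0 := Nat.even_iff.mp hme
        have hi2 : i % 2 = 1 := by omega
        rw [hm2, hi2] at h2
        simpa using h2
      · -- m odd, j odd, i even
        have hm2 : m % 2 = 1 := Nat.odd_iff.mp hmo
        have hi2 : i % 2 = 0 := by omega
        have h2 : m.choose i % 2 = (Nat.choose (m % 2) (i % 2) * Nat.choose (m / 2) (i / 2)) % 2 :=
          lucas2 m i
        have h3 : m.choose (i + 1) % 2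
            = (Nat.choose (m % 2) ((i + 1) % 2) * Nat.choose (m / 2) ((i + 1) / 2)) % 2 :=
          lucas2 m (i + 1)
        rw [hm2, hi2] at h2
        rw [hm2] at h3
        have hdiv : (i + 1) / 2 = i / 2 := by omega
        have h12 : (i + 1) % 2 = 1 := by omega
        rw [h12, hdiv] at h3
        simp only [Nat.choose_one_right, Nat.choose_zero_right, one_mul] at h2 h3
        omega
    omega

lemma diag_of {K : Type*} [CommRing K] (P Q M : Matrix (Fin 2) (Fin 2) K)
    (hQP : Q * P = 1) (hPQ : P * Q = 1) (h : (Q * M * P).IsDiag) :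
    M.IsDiagonalizable :=
  ⟨P, ⟨⟨P, Q, hPQ, hQP⟩, rfl⟩, by rw [Matrix.inv_eq_left_inv hQP]; exact h⟩

lemma isDiag_fin_two {K : Type*} [CommRing K] (a b : K) : (!![a, 0; 0, b] : Matrix (Fin 2) (Fin 2) K).IsDiag := by
  intro i j hij
  fin_cases i <;> fin_cases j <;> simp_all

lemma antidiag_not_diag {K : Type*} [Field K] [CharP K 2] (u v : K) (hu : u ≠ 0) (hv : v ≠ 0) :
    ¬ (!![0, u; v, 0] : Matrix (Fin 2) (Fin 2) K).IsDiagonalizable := by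
  rintro ⟨P, hP, hdiag⟩
  set M : Matrix (Fin 2) (Fin 2) K := !![0, u; v, 0] with hMdef
  have hdet : IsUnit P.det := (Matrix.isUnit_iff_isUnit_det P).mp hP
  have h1 : P⁻¹ * P = 1 := Matrix.nonsing_inv_mul P hdet
  have h2 : P * P⁻¹ = 1 := Matrix.mul_nonsing_inv P hdet
  set D := P⁻¹ * M * P with hDdef
  have hD01 : D 0 1 = 0 := hdiag (by decide)
  have hD10 : D 1 0 = 0 := hdiag (by decide)
  have hMM : M * M = (u * v) • (1 : Matrix (Fin 2) (Fin 2) K) := by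
    ext i j
    fin_cases i <;> fin_cases j <;>
      simp [hMdef, Matrix.mul_fin_two, Matrix.one_apply, mul_comm]
  have hDD : D * D = P⁻¹ * (M * M) * P := by
    simp only [hDdef, ← Matrix.mul_assoc]
    rw [Matrix.mul_assoc (P⁻¹ * M) P P⁻¹, h2, Matrix.mul_one]
  have hDD2 : D * D = (u * v) • (1 : Matrix (Fin 2) (Fin 2) K) := by
    rw [hDD, hMM, Matrix.mul_smul, Matrix.smul_mul, Matrix.mul_one, h1]
  have h00 : D 0 0 * D 0 0 = u * v := by
    have h := congrFun (congrFun hDD2 0) 0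
    simpa [Matrix.mul_apply, Fin.sum_univ_two, hD01, hD10, Matrix.one_apply] using h
  have h11 : D 1 1 * D 1 1 = u * v := by
    have h := congrFun (congrFun hDD2 1) 1
    simpa [Matrix.mul_apply, Fin.sum_univ_two, hD01, hD10, Matrix.one_apply] using h
  have heq : D 0 0 = D 1 1 := by
    have hsq : (D 0 0 + D 1 1) * (D 0 0 + D 1 1) = 0 := by
      rw [CharTwo.add_mul_self, h00, h11, CharTwo.add_self_eq_zero]
    have hz := mul_self_eq_zero.mp hsq
    rw [← CharTwo.neg_eq (D 1 1)]
    exact eq_neg_of_add_eq_zero_left hz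
  have hDscalar : D = D 0 0 • (1 : Matrix (Fin 2) (Fin 2) K) := by
    ext i j
    fin_cases i <;> fin_cases j <;> simp [hD01, hD10, ← heq, Matrix.one_apply]
  have hM : P * D * P⁻¹ = M := by
    simp only [hDdef, ← Matrix.mul_assoc]
    rw [h2, Matrix.one_mul, Matrix.mul_assoc, h2, Matrix.mul_one]
  rw [hDscalar, Matrix.mul_smul, Matrix.smul_mul, Matrix.mul_one, h2] at hM
  have := congrFun (congrFun hM 0) 1
  simp [hMdef, Matrix.one_apply] at this
  exact hu this.symm

set_option maxHeartbeats 1000000 in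
/-- In even characteristic, for `k > q + 3`, the two-element class block `M_j` of the
Atkin operator `U_t` is diagonalizable iff `α` is odd or `β` is even; in particular it
is diagonalizable when `k` is even. -/
theorem stmt1 (r : ℕ) (hr : 1 ≤ r) (q : ℕ) (hq : q = 2 ^ r)
    (k j : ℕ) (hk : q + 3 < k) (hj : j ≤ q - 2)
    (hjk : j + (q - 1) ≤ k - 2) (hjk' : k - 2 < j + 2 * (q - 1))
    (α β γ : ℕ)
    (hα : α = (k - 2 - j).choose j)
    (hβ : β = (k - 1 - j - q).choose j)
    (hγ : γ = (k - 2 - j).choose (q - 1) + (k - 2 - j).choose (j + q - 1))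
    (K : Type*) [Field K] [Algebra (RatFunc (ZMod 2)) K] [IsAlgClosure (RatFunc (ZMod 2)) K]
    (t : K) (ht : t = algebraMap (RatFunc (ZMod 2)) K RatFunc.X) :
    (Matrix.IsDiagonalizable
      !![(α : K) * t ^ (j + 1), (γ : K) * t ^ (j + q);
         (β : K) * t ^ (j + 1), 0] ↔ (Odd α ∨ Even β)) ∧
    (Even k → Matrix.IsDiagonalizable
      !![(α : K) * t ^ (j + 1), (γ : K) * t ^ (j + q);
         (β : K) * t ^ (j + 1), 0]) := by
  haveI : CharP (RatFunc (ZMod 2)) 2 :=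
    charP_of_injective_algebraMap (algebraMap (ZMod 2) (RatFunc (ZMod 2))).injective 2
  haveI hK2 : CharP K 2 :=
    charP_of_injective_algebraMap (algebraMap (RatFunc (ZMod 2)) K).injective 2
  have hq2 : 2 ≤ q := by
    rw [hq]
    calc (2:ℕ) = 2 ^ 1 := by norm_num
      _ ≤ 2 ^ r := Nat.pow_le_pow_right (by norm_num) hr
  have ht0 : t ≠ 0 := by
    rw [ht]
    intro h
    exact RatFunc.X_ne_zero ((algebraMap (RatFunc (ZMod 2)) K).injective (by simpa using h))
  have htp : ∀ s : ℕ, t ^ s ≠ 0 := fun s => pow_ne_zero s ht0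
  have hcast : ∀ a : ℕ, (a : K) = ((a % 2 : ℕ) : K) := by
    intro a
    conv_lhs => rw [← Nat.div_add_mod a 2]
    push_cast
    rw [CharTwo.two_eq_zero]
    ring
  have hγab : γ % 2 = (α + β) % 2 := by
    rw [hγ, hα, hβ]; exact gamma_parity r q k j hr hq hk hj hjk hjk'
  have hpow : t ^ (j + 1) * t ^ (q - 1) = t ^ (j + q) := by
    rw [← pow_add]; congr 1; omega
  set M : Matrix (Fin 2) (Fin 2) K :=
    !![(α : K) * t ^ (j + 1), (γ : K) * t ^ (j + q);
       (β : K) * t ^ (j + 1), 0] with hM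
  have hiff : M.IsDiagonalizable ↔ (α % 2 = 1 ∨ β % 2 = 0) := by
    constructor
    · intro hd
      by_contra hcon
      push_neg at hcon
      obtain ⟨ha, hb⟩ := hcon
      have ha0 : α % 2 = 0 := by omega
      have hb1 : β % 2 = 1 := by omega
      have hg1 : γ % 2 = 1 := by omega
      have haK : (α : K) = 0 := by rw [hcast α, ha0]; norm_num
      have hbK : (β : K) = 1 := by rw [hcast β, hb1]; norm_num
      have hgK : (γ : K) = 1 := by rw [hcast γ, hg1]; norm_num
      rw [hM] at hd
      simp only [haK, hbK, hgK, zero_mul, one_mul] at hd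
      exact antidiag_not_diag (t ^ (j + q)) (t ^ (j + 1)) (htp _) (htp _) hd
    · intro h
      have hb2 : β % 2 = 0 ∨ β % 2 = 1 := by omega
      have ha2 : α % 2 = 0 ∨ α % 2 = 1 := by omega
      rw [hM]
      rcases ha2 with ha0 | ha1
      · -- α even; then β must be even from h
        have hb0 : β % 2 = 0 := by rcases h with h | h <;> omega
        have hg0 : γ % 2 = 0 := by omega
        have haK : (α : K) = 0 := by rw [hcast α, ha0]; norm_num
        have hbK : (β : K) = 0 := by rw [hcast β, hb0]; norm_num
        have hgK : (γ : K) = 0 := by rw [hcast γ, hg0]; norm_num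
        simp only [haK, hbK, hgK, zero_mul]
        refine diag_of 1 1 _ (by simp) (by simp) ?_
        rw [Matrix.one_mul, Matrix.mul_one]
        exact isDiag_fin_two 0 0
      · have haK : (α : K) = 1 := by rw [hcast α, ha1]; norm_num
        rcases hb2 with hb0 | hb1
        · -- α odd, β even, γ odd
          have hg1 : γ % 2 = 1 := by omega
          have hbK : (β : K) = 0 := by rw [hcast β, hb0]; norm_num
          have hgK : (γ : K) = 1 := by rw [hcast γ, hg1]; norm_num
          simp only [haK, hbK, hgK, zero_mul, one_mul]
          refine diag_of !![1, t ^ (q - 1); 0, 1] !![1, t ^ (q - 1); 0, 1] _ ?_ ?_ ?_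
          · rw [Matrix.mul_fin_two, Matrix.one_fin_two]
            simp [CharTwo.add_self_eq_zero]
          · rw [Matrix.mul_fin_two, Matrix.one_fin_two]
            simp [CharTwo.add_self_eq_zero]
          · have hcomp : (!![1, t ^ (q - 1); 0, 1] : Matrix (Fin 2) (Fin 2) K) *
                !![t ^ (j + 1), t ^ (j + q); 0, 0] * !![1, t ^ (q - 1); 0, 1]
                = !![t ^ (j + 1), 0; 0, 0] := by
              rw [Matrix.mul_fin_two, Matrix.mul_fin_two]
              simp only [one_mul, mul_one, zero_mul, mul_zero, add_zero, zero_add, hpow,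
                CharTwo.add_self_eq_zero]
            rw [hcomp]
            exact isDiag_fin_two _ _
        · -- α odd, β odd, γ even
          have hg0 : γ % 2 = 0 := by omega
          have hbK : (β : K) = 1 := by rw [hcast β, hb1]; norm_num
          have hgK : (γ : K) = 0 := by rw [hcast γ, hg0]; norm_num
          simp only [haK, hbK, hgK, zero_mul, one_mul]
          refine diag_of !![1, 0; 1, 1] !![1, 0; 1, 1] _ ?_ ?_ ?_
          · rw [Matrix.mul_fin_two, Matrix.one_fin_two]
            simp [CharTwo.add_self_eq_zero]
          · rw [Matrix.mul_fin_two, Matrix.one_fin_two]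
            simp [CharTwo.add_self_eq_zero]
          · have hcomp : (!![1, 0; 1, 1] : Matrix (Fin 2) (Fin 2) K) *
                !![t ^ (j + 1), 0; t ^ (j + 1), 0] * !![1, 0; 1, 1]
                = !![t ^ (j + 1), 0; 0, 0] := by
              rw [Matrix.mul_fin_two, Matrix.mul_fin_two]
              simp only [one_mul, mul_one, zero_mul, mul_zero, add_zero, zero_add,
                CharTwo.add_self_eq_zero]
            rw [hcomp]
            exact isDiag_fin_two _ _
  constructor
  · rw [hiff, Nat.odd_iff, Nat.even_iff]
  · intro hke
    refine hiff.mpr ?_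
    have := evenk_lem r q k j hr hq hk hj hjk hjk' hke
    rw [← hα, ← hβ] at this
    exact this
end

section
/- Let p be a prime, r ≥ 1 an integer, q = p^r, let F = F_q(t) be the rational function field over the field with q elements, and let K be an algebraic closure of F. The 2×2 matrix M = [[0, −t^{q+1}], [−t², 0]] over F is diagonalizable over K if and only if q is odd. Moreover, when q is odd, M is similar over F itself to the diagonal matrix diag(t^{(q+3)/2}, −t^{(q+3)/2}), with eigenvectors ±t^{(q−1)/2}·e₁ + e₂ (where e₁, e₂ is the standard basis). -/
open Matrix

set_option synthInstance.maxHeartbeats 1000000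
set_option maxHeartbeats 1000000

/-- The antidiagonal block `M₁ = [[0, -t^(q+1)], [-t², 0]]` of the Atkin operator for
weight `k = q + 3` is diagonalizable over the algebraic closure iff `q` is odd;
moreover for odd `q` it is similar over `F_q(t)` itself to `diag(t^((q+3)/2), -t^((q+3)/2))`,
with eigenvectors `±t^((q-1)/2)·e₁ + e₂`. -/
theorem stmt2 (p r : ℕ) [Fact p.Prime] (hr : 1 ≤ r) (q : ℕ) (hq : q = p ^ r)
    (K : Type*) [Field K] [Algebra (RatFunc (GaloisField p r)) K]
    [IsAlgClosure (RatFunc (GaloisField p r)) K] :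
    let F := RatFunc (GaloisField p r)
    let t : F := RatFunc.X
    let M : Matrix (Fin 2) (Fin 2) F := !![0, -t ^ (q + 1); -t ^ 2, 0]
    (Matrix.IsDiagonalizable (M.map (algebraMap F K)) ↔ Odd q) ∧
    (Odd q →
      (∃ P : Matrix (Fin 2) (Fin 2) F, IsUnit P ∧
        Matrix.diagonal ![t ^ ((q + 3) / 2), -t ^ ((q + 3) / 2)] = P⁻¹ * M * P) ∧
      M *ᵥ ![-t ^ ((q - 1) / 2), 1] = t ^ ((q + 3) / 2) • ![-t ^ ((q - 1) / 2), 1] ∧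
      M *ᵥ ![t ^ ((q - 1) / 2), 1] = (-t ^ ((q + 3) / 2)) • ![t ^ ((q - 1) / 2), 1]) := by
  intro F t M
  have hp : p.Prime := Fact.out
  have hq2 : 2 ≤ q := by
    rw [hq]
    calc 2 ≤ p := hp.two_le
    _ ≤ p ^ r := Nat.le_self_pow (by omega) p
  have ht : t ≠ 0 := RatFunc.X_ne_zero
  haveI : CharP F p :=
    charP_of_injective_algebraMap (algebraMap (GaloisField p r) F).injective p
  haveI hKp : CharP K p := charP_of_injective_algebraMap (algebraMap F K).injective p
  set f : F →+* K := algebraMap F K with hf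
  have hfinj : Function.Injective f := f.injective
  -- the key construction for odd q
  have key : Odd q →
      (∃ P : Matrix (Fin 2) (Fin 2) F, IsUnit P ∧
        Matrix.diagonal ![t ^ ((q + 3) / 2), -t ^ ((q + 3) / 2)] = P⁻¹ * M * P) ∧
      M *ᵥ ![-t ^ ((q - 1) / 2), 1] = t ^ ((q + 3) / 2) • ![-t ^ ((q - 1) / 2), 1] ∧
      M *ᵥ ![t ^ ((q - 1) / 2), 1] = (-t ^ ((q + 3) / 2)) • ![t ^ ((q - 1) / 2), 1] := by
    intro hodd
    obtain ⟨m, hm⟩ : ∃ m, q = 2 * m + 1 := hodd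
    have h1 : q + 1 = 2 * m + 2 := by omega
    have h2 : (q + 3) / 2 = m + 2 := by omega
    have h3 : (q - 1) / 2 = m := by omega
    have h2F : (2 : F) ≠ 0 := by
      intro h
      have : (p : ℕ) ∣ 2 := by
        have := (CharP.cast_eq_zero_iff F p 2).mp (by exact_mod_cast h)
        exact_mod_cast this
      have hp2 : p = 2 := ((Nat.prime_dvd_prime_iff_eq hp Nat.prime_two).mp this)
      have hev : Even q := by
        rw [hq, hp2]
        exact (Nat.even_pow' (by omega)).mpr even_two
      obtain ⟨k, hk⟩ := hev
      omega
    set P : Matrix (Fin 2) (Fin 2) F := !![-t ^ m, t ^ m; 1, 1] with hP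
    have hdet : P.det = -(2 * t ^ m) := by
      simp [hP, Matrix.det_fin_two_of]; ring
    have hdetu : IsUnit P.det := by
      rw [hdet]
      exact isUnit_iff_ne_zero.mpr (by
        simp only [neg_ne_zero, mul_ne_zero_iff]
        exact ⟨h2F, pow_ne_zero m ht⟩)
    have hPu : IsUnit P := (Matrix.isUnit_iff_isUnit_det P).mpr hdetu
    have hMP : M * P = P * Matrix.diagonal ![t ^ ((q + 3) / 2), -t ^ ((q + 3) / 2)] := by
      rw [h2]
      ext i j
      fin_cases i <;> fin_cases j <;>
        simp [M, hP, Matrix.mul_apply, Fin.sum_univ_two, Matrix.diagonal, h1] <;> ring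
    refine ⟨⟨P, hPu, ?_⟩, ?_, ?_⟩
    · rw [Matrix.mul_assoc, hMP, Matrix.nonsing_inv_mul_cancel_left P _ hdetu]
    · funext i
      fin_cases i <;>
        simp [M, Matrix.mulVec, dotProduct, Fin.sum_univ_two, h1, h2, h3] <;> ring
    · funext i
      fin_cases i <;>
        simp [M, Matrix.mulVec, dotProduct, Fin.sum_univ_two, h1, h2, h3] <;> ring
  refine ⟨⟨?_, ?_⟩, key⟩
  · -- diagonalizable over K → odd q
    intro hdiag
    by_contra hodd
    have heven : Even q := Nat.not_odd_iff_even.mp hodd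
    have hp2 : p = 2 := by
      have h2d : (2 : ℕ) ∣ p ^ r := hq ▸ heven.two_dvd
      have := (Nat.Prime.dvd_of_dvd_pow (p := 2) Nat.prime_two h2d)
      exact ((Nat.prime_dvd_prime_iff_eq Nat.prime_two hp).mp this).symm
    haveI : CharP K 2 := hp2 ▸ hKp
    obtain ⟨P, hPu, hD⟩ := hdiag
    set M' := M.map f with hM'
    set D := P⁻¹ * M' * P with hDdef
    have hdetu : IsUnit P.det := (Matrix.isUnit_iff_isUnit_det P).mp hPu
    have htr : D.trace = M'.trace := by
      rw [hDdef, Matrix.trace_mul_comm, ← Matrix.mul_assoc,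
        Matrix.mul_nonsing_inv P hdetu, Matrix.one_mul]
    have htr0 : M'.trace = 0 := by
      simp [hM', M, Matrix.trace_fin_two]
    have hD11 : D 1 1 = D 0 0 := by
      have := htr.trans htr0
      rw [Matrix.trace_fin_two] at this
      have h' : D 1 1 = -(D 0 0) := by linear_combination this
      rw [h', CharTwo.neg_eq]
    have hDs : D = D 0 0 • (1 : Matrix (Fin 2) (Fin 2) K) := by
      ext i j
      fin_cases i <;> fin_cases j
      · simp
      · simpa using hD (show (0 : Fin 2) ≠ 1 by decide)
      · simpa using hD (show (1 : Fin 2) ≠ 0 by decide)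
      · simpa using hD11
    have hM's : M' = D 0 0 • (1 : Matrix (Fin 2) (Fin 2) K) := by
      have hPDP : P * D * P⁻¹ = M' := by
        rw [hDdef, Matrix.mul_assoc P⁻¹ M' P,
          Matrix.mul_nonsing_inv_cancel_left P _ hdetu,
          Matrix.mul_nonsing_inv_cancel_right _ _ hdetu]
      rw [← hPDP]
      nth_rewrite 1 [hDs]
      rw [Matrix.mul_smul, Matrix.mul_one, Matrix.smul_mul,
        Matrix.mul_nonsing_inv P hdetu]
    have : M' 0 1 = 0 := by rw [hM's]; simp
    have hne : M' 0 1 ≠ 0 := by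
      have he : M' 0 1 = f (-t ^ (q + 1)) := by simp [hM', M]
      rw [he, map_neg, map_pow, neg_ne_zero]
      exact pow_ne_zero _ (fun h => ht (hfinj (by simpa using h)))
    exact hne this
  · -- odd q → diagonalizable over K
    intro hodd
    obtain ⟨⟨P, hPu, hPD⟩, -⟩ := key hodd
    refine ⟨P.map f, ?_, ?_⟩
    · have := hPu.map f.mapMatrix
      simpa [RingHom.mapMatrix_apply] using this
    · have hdetu : IsUnit P.det := (Matrix.isUnit_iff_isUnit_det P).mp hPu
      have hdetuK : IsUnit (P.map f).det := by
        have h := hdetu.map f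
        rw [RingHom.map_det, RingHom.mapMatrix_apply] at h
        exact h
      have hMP : M * P = P * Matrix.diagonal ![t ^ ((q + 3) / 2), -t ^ ((q + 3) / 2)] := by
        rw [hPD, ← Matrix.mul_assoc, ← Matrix.mul_assoc,
          Matrix.mul_nonsing_inv P hdetu, Matrix.one_mul]
      have hMPK : M.map f * P.map f =
          P.map f * (Matrix.diagonal ![t ^ ((q + 3) / 2), -t ^ ((q + 3) / 2)]).map f := by
        rw [← Matrix.map_mul, ← Matrix.map_mul, hMP]
      rw [Matrix.mul_assoc, hMPK, Matrix.nonsing_inv_mul_cancel_left _ _ hdetuK,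
        Matrix.diagonal_map (map_zero f)]
      exact Matrix.isDiag_diagonal _
end

section
/- Let p be a prime, r ≥ 1 an integer, q = p^r, let K be an algebraic closure of the rational function field F_p(t), t the image in K of the indeterminate, and let j ≥ 0 be an integer. Let α, β, γ be elements of the prime field F_p ⊂ K, and set M = [[(−1)^j·α·t^{j+1}, −γ·t^{j+q}], [(−1)^j·β·t^{j+1}, 0]]. If M is not the zero matrix, then M is diagonalizable over K if and only if α ≠ 0, or p is odd and βγ ≠ 0. -/
open Matrix

lemma myPowCharBot {K : Type*} [Field K] {p : ℕ} [Fact p.Prime] [CharP K p]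
    {x : K} (hx : x ∈ (⊥ : Subfield K)) : x ^ p = x := by
  have hle : (⊥ : Subfield K) ≤ RingHom.eqLocusField (frobenius K p) (RingHom.id K) := bot_le
  have h := hle hx
  simpa [frobenius_def] using h

lemma myDiagSqZero {K : Type*} [Field K] {D : Matrix (Fin 2) (Fin 2) K}
    (hD : D.IsDiag) (h : D * D = 0) : D = 0 := by
  ext i k
  by_cases hik : i = k
  · subst hik
    have h2 := congrFun (congrFun h i) i
    have hDii : D i i * D i i = 0 := by
      rw [Matrix.mul_apply, Fin.sum_univ_two] at h2
      fin_cases i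
      · simpa [hD (show (1:Fin 2) ≠ 0 by decide), hD (show (0:Fin 2) ≠ 1 by decide)] using h2
      · simpa [hD (show (1:Fin 2) ≠ 0 by decide), hD (show (0:Fin 2) ≠ 1 by decide)] using h2
    simpa using mul_self_eq_zero.mp hDii
  · simp [hD hik]

lemma myIsDiag22 {K : Type*} [Field K] (x y : K) :
    (!![x, 0; 0, y] : Matrix (Fin 2) (Fin 2) K).IsDiag := by
  intro i j hij
  fin_cases i <;> fin_cases j <;> simp_all

lemma myDiagOfConj {K : Type*} [Field K] (M P D : Matrix (Fin 2) (Fin 2) K)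
    (hP : IsUnit P.det) (hD : D.IsDiag) (h : M * P = P * D) : M.IsDiagonalizable := by
  refine ⟨P, (Matrix.isUnit_iff_isUnit_det P).2 hP, ?_⟩
  rw [Matrix.mul_assoc, h, ← Matrix.mul_assoc, Matrix.nonsing_inv_mul _ hP, Matrix.one_mul]
  exact hD

lemma myQuadRoot {K : Type*} [Field K] [IsAlgClosed K] (u v : K) :
    ∃ l : K, l ^ 2 = u * l + v := by
  obtain ⟨l, hl⟩ := IsAlgClosed.exists_root
    (Polynomial.C 1 * Polynomial.X ^ 2 + Polynomial.C (-u) * Polynomial.X + Polynomial.C (-v))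
    (by rw [Polynomial.degree_quadratic one_ne_zero]; exact two_ne_zero)
  refine ⟨l, ?_⟩
  have := hl
  simp only [Polynomial.IsRoot, Polynomial.eval_add, Polynomial.eval_mul, Polynomial.eval_pow,
    Polynomial.eval_C, Polynomial.eval_X, one_mul] at this
  linear_combination this

/-- The general dimension-2 block `M_j` of the Atkin operator `U_t`, with coefficients
`α, β, γ` in the prime field `F_p ⊂ K`: if `M ≠ 0`, then `M` is diagonalizable over the
algebraic closure `K` of `F_p(t)` iff `α ≠ 0`, or `p` is odd and `βγ ≠ 0`. -/
theorem stmt3 (p r : ℕ) [Fact p.Prime] (hr : 1 ≤ r) (q : ℕ) (hq : q = p ^ r)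
    (K : Type*) [Field K] [Algebra (RatFunc (ZMod p)) K] [IsAlgClosure (RatFunc (ZMod p)) K]
    (t : K) (ht : t = algebraMap (RatFunc (ZMod p)) K RatFunc.X)
    (j : ℕ) (α β γ : K)
    (hα : α ∈ (⊥ : Subfield K)) (hβ : β ∈ (⊥ : Subfield K)) (hγ : γ ∈ (⊥ : Subfield K))
    (M : Matrix (Fin 2) (Fin 2) K)
    (hM : M = !![(-1 : K) ^ j * α * t ^ (j + 1), -γ * t ^ (j + q);
                 (-1 : K) ^ j * β * t ^ (j + 1), 0])
    (hM0 : M ≠ 0) :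
    Matrix.IsDiagonalizable M ↔ (α ≠ 0 ∨ (Odd p ∧ β * γ ≠ 0)) := by
  have hp := Fact.out (p := p.Prime)
  haveI : IsAlgClosed K := IsAlgClosure.isAlgClosed (RatFunc (ZMod p))
  haveI : CharP K p := charP_of_injective_ringHom
    ((algebraMap (RatFunc (ZMod p)) K).comp
      (algebraMap (Polynomial (ZMod p)) (RatFunc (ZMod p))) |>.comp
      (Polynomial.C : ZMod p →+* Polynomial (ZMod p))).injective p
  have htinj : Function.Injective (algebraMap (RatFunc (ZMod p)) K) :=
    (algebraMap (RatFunc (ZMod p)) K).injective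
  -- t^n ≠ 1 for n ≠ 0
  have htpow : ∀ n : ℕ, n ≠ 0 → t ^ n ≠ 1 := by
    intro n hn h
    rw [ht, ← map_pow, ← map_one (algebraMap (RatFunc (ZMod p)) K)] at h
    have hX : (RatFunc.X : RatFunc (ZMod p)) ^ n = 1 := htinj h
    rw [← RatFunc.algebraMap_X, ← map_pow, ← _root_.map_one (algebraMap (Polynomial (ZMod p)) (RatFunc (ZMod p)))] at hX
    have hX2 : (Polynomial.X : Polynomial (ZMod p)) ^ n = 1 := RatFunc.algebraMap_injective _ hX
    have := congrArg Polynomial.natDegree hX2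
    simp [Polynomial.natDegree_X_pow] at this
    exact hn this
  have ht0 : t ≠ 0 := by
    intro h
    rw [ht, ← map_zero (algebraMap (RatFunc (ZMod p)) K)] at h
    exact RatFunc.X_ne_zero (htinj h)
  have htbot : ∀ m : ℕ, m ≠ 0 → t ^ m ∉ (⊥ : Subfield K) := by
    intro m hm hmem
    have h1 : (t ^ m) ^ p = t ^ m := myPowCharBot hmem
    have hne : t ^ m ≠ 0 := pow_ne_zero _ ht0
    have hpm : m * (p - 1) + m = m * p := by
      have := hp.two_le
      have h' : p - 1 + 1 = p := by omega
      calc m * (p - 1) + m = m * (p - 1 + 1) := by ring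
        _ = m * p := by rw [h']
    have h2 : t ^ (m * (p - 1)) * t ^ m = 1 * t ^ m := by
      rw [one_mul, ← pow_add, hpm, pow_mul]
      exact h1
    have h3 : t ^ (m * (p - 1)) = 1 := mul_right_cancel₀ hne h2
    exact htpow _ (Nat.mul_ne_zero hm (by have := hp.two_le; omega)) h3
  have hsgn : ((-1 : K) ^ j) ≠ 0 := pow_ne_zero j (neg_ne_zero.mpr one_ne_zero)
  have hsq : ((-1 : K) ^ j) ^ 2 = 1 := by
    rw [← pow_mul, pow_mul']
    simp
  obtain ⟨a, ha_def⟩ : ∃ x : K, x = (-1 : K) ^ j * α * t ^ (j + 1) := ⟨_, rfl⟩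
  obtain ⟨b, hb_def⟩ : ∃ x : K, x = -γ * t ^ (j + q) := ⟨_, rfl⟩
  obtain ⟨c, hc_def⟩ : ∃ x : K, x = (-1 : K) ^ j * β * t ^ (j + 1) := ⟨_, rfl⟩
  rw [← ha_def, ← hb_def, ← hc_def] at hM
  obtain ⟨m, hmq, hm0⟩ : ∃ m, q = m + 1 ∧ m ≠ 0 := by
    have hq2 : 2 ≤ q := by
      rw [hq]
      exact le_trans hp.two_le (Nat.le_self_pow (by omega) p)
    exact ⟨q - 1, by omega, by omega⟩
  obtain ⟨c', hc'def⟩ : ∃ x : K, x = -(4 * (-1 : K) ^ j * (β * γ)) := ⟨_, rfl⟩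
  have hΔeq : a ^ 2 + 4 * (b * c) = t ^ (2 * j + 2) * (α ^ 2 + c' * t ^ m) := by
    rw [ha_def, hb_def, hc_def, hc'def, hmq]
    linear_combination (α ^ 2 * t ^ (2 * j + 2)) * hsq
  have hbceq : b * c = -((-1 : K) ^ j * (β * γ) * t ^ (2 * j + q + 1)) := by
    rw [hb_def, hc_def]; ring
  -- membership of c' in the prime field
  have h4mem : (4 : K) ∈ (⊥ : Subfield K) := by
    have := natCast_mem (⊥ : Subfield K) 4
    simpa using this
  have hc'mem : c' ∈ (⊥ : Subfield K) := by
    rw [hc'def]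
    exact neg_mem (mul_mem (mul_mem h4mem (pow_mem (neg_mem (one_mem _)) j)) (mul_mem hβ hγ))
  -- RHS implies the discriminant factor is nonzero
  have hsum : (α ≠ 0 ∨ (Odd p ∧ β * γ ≠ 0)) → α ^ 2 + c' * t ^ m ≠ 0 := by
    intro hrhs hzero
    by_cases hc'0 : c' = 0
    · rw [hc'0, zero_mul, add_zero] at hzero
      have hα0 : α = 0 := sq_eq_zero_iff.mp hzero
      rcases hrhs with h | ⟨hop, hbγ⟩
      · exact h hα0
      · have h2K : (2 : K) ≠ 0 := by
          intro h2
          have hdvd : (p : ℕ) ∣ 2 := (CharP.cast_eq_zero_iff K p 2).mp (by exact_mod_cast h2)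
          have hp2 : p = 2 := ((Nat.prime_dvd_prime_iff_eq hp Nat.prime_two).mp hdvd)
          rw [hp2] at hop
          exact (by decide : ¬ Odd 2) hop
        have h4 : (4 : K) ≠ 0 := by
          have h44 : (4 : K) = 2 * 2 := by norm_num
          rw [h44]; exact mul_ne_zero h2K h2K
        rw [hc'def] at hc'0
        exact (neg_ne_zero.mpr (mul_ne_zero (mul_ne_zero h4 hsgn) hbγ)) hc'0
    · by_cases hα0 : α = 0
      · rw [hα0] at hzero
        have hz : c' * t ^ m = 0 := by linear_combination hzero
        exact (mul_ne_zero hc'0 (pow_ne_zero _ ht0)) hz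
      · have hmem : t ^ m ∈ (⊥ : Subfield K) := by
          have heq : t ^ m = -α ^ 2 / c' := by
            rw [eq_div_iff hc'0]; linear_combination hzero
          rw [heq]
          exact div_mem (neg_mem (pow_mem hα 2)) hc'mem
        exact htbot m hm0 hmem
  constructor
  · -- diagonalizable → RHS
    rintro ⟨P, hPu, hPD⟩
    by_contra hcon
    push_neg at hcon
    obtain ⟨hα0, h2⟩ := hcon
    have ha0 : a = 0 := by rw [ha_def, hα0]; ring
    have hPdet : IsUnit P.det := (Matrix.isUnit_iff_isUnit_det P).1 hPu
    have hPPinv : P * P⁻¹ = 1 := Matrix.mul_nonsing_inv _ hPdet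
    have hPinvP : P⁻¹ * P = 1 := Matrix.nonsing_inv_mul _ hPdet
    have hcanc : ∀ A : Matrix (Fin 2) (Fin 2) K, P * (P⁻¹ * A * P) = A * P := by
      intro A
      rw [← Matrix.mul_assoc, ← Matrix.mul_assoc, hPPinv, Matrix.one_mul]
    have hrecover : ∀ A : Matrix (Fin 2) (Fin 2) K, P * (P⁻¹ * A * P) * P⁻¹ = A := by
      intro A
      rw [hcanc, Matrix.mul_assoc, hPPinv, Matrix.mul_one]
    have hconj2 : ∀ A : Matrix (Fin 2) (Fin 2) K,
        (P⁻¹ * A * P) * (P⁻¹ * A * P) = P⁻¹ * (A * A) * P := by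
      intro A
      calc (P⁻¹ * A * P) * (P⁻¹ * A * P) = P⁻¹ * A * (P * (P⁻¹ * A * P)) := by
            rw [Matrix.mul_assoc]
        _ = P⁻¹ * A * (A * P) := by rw [hcanc]
        _ = P⁻¹ * (A * A) * P := by simp only [Matrix.mul_assoc]
    by_cases hbγ : β * γ = 0
    · have hbc : b * c = 0 := by rw [hbceq, hbγ]; ring
      have hM2 : M * M = 0 := by
        ext i k
        fin_cases i <;> fin_cases k <;>
          simp [hM, ha0, Matrix.mul_apply, Fin.sum_univ_two,
            -mul_eq_zero, -neg_eq_zero] <;>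
          first
            | linear_combination hbc
            | ring
      have hDD : (P⁻¹ * M * P) * (P⁻¹ * M * P) = 0 := by
        rw [hconj2, hM2, Matrix.mul_zero, Matrix.zero_mul]
      have hDz := myDiagSqZero hPD hDD
      apply hM0
      calc M = P * (P⁻¹ * M * P) * P⁻¹ := (hrecover M).symm
        _ = 0 := by rw [hDz, Matrix.mul_zero, Matrix.zero_mul]
    · have hop : ¬ Odd p := fun h => hbγ (h2 h)
      have hp2 : p = 2 := (Nat.Prime.even_iff hp).mp (Nat.not_odd_iff_even.mp hop)
      have h2K : (2 : K) = 0 := by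
        have hcast := CharP.cast_eq_zero K p
        rw [hp2] at hcast
        exact_mod_cast hcast
      obtain ⟨hβ0, hγ0⟩ := mul_ne_zero_iff.mp hbγ
      have hbne : b ≠ 0 := by
        rw [hb_def]
        exact mul_ne_zero (neg_ne_zero.mpr hγ0) (pow_ne_zero _ ht0)
      obtain ⟨s, hs⟩ := myQuadRoot (0 : K) (b * c)
      obtain ⟨N, hNdef⟩ : ∃ X : Matrix (Fin 2) (Fin 2) K, X = !![-s, b; c, -s] := ⟨_, rfl⟩
      have hNM : N = M - s • (1 : Matrix (Fin 2) (Fin 2) K) := by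
        rw [hNdef, hM, ha0]
        ext i k
        fin_cases i <;> fin_cases k <;>
          simp [Matrix.one_apply, -mul_eq_zero, -neg_eq_zero] <;> ring
      have hNN : N * N = 0 := by
        rw [hNdef]
        ext i k
        fin_cases i <;> fin_cases k <;>
          simp [Matrix.mul_apply, Fin.sum_univ_two, -mul_eq_zero, -neg_eq_zero] <;>
          first
            | linear_combination hs + b * c * h2K
            | linear_combination (-(s * b)) * h2K
            | linear_combination (-(s * c)) * h2K
            | ring
      have hE : P⁻¹ * N * P = P⁻¹ * M * P - s • (1 : Matrix (Fin 2) (Fin 2) K) := by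
        rw [hNM, Matrix.mul_sub, Matrix.sub_mul]
        congr 1
        rw [mul_smul_comm, Matrix.mul_one, smul_mul_assoc, hPinvP]
      have hEdiag : (P⁻¹ * M * P - s • (1 : Matrix (Fin 2) (Fin 2) K)).IsDiag := by
        intro i k hik
        simp [Matrix.sub_apply, Matrix.smul_apply, Matrix.one_apply_ne hik, hPD hik]
      have hEE : (P⁻¹ * M * P - s • (1 : Matrix (Fin 2) (Fin 2) K)) *
          (P⁻¹ * M * P - s • (1 : Matrix (Fin 2) (Fin 2) K)) = 0 := by
        rw [← hE, hconj2, hNN, Matrix.mul_zero, Matrix.zero_mul]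
      have hEz := myDiagSqZero hEdiag hEE
      have hNz : N = 0 := by
        calc N = P * (P⁻¹ * N * P) * P⁻¹ := (hrecover N).symm
          _ = 0 := by rw [hE, hEz, Matrix.mul_zero, Matrix.zero_mul]
      apply hbne
      have hentry := congrFun (congrFun hNz 0) 1
      rw [hNdef] at hentry
      simpa using hentry
  · -- RHS → diagonalizable
    intro hrhs
    have hΔ : a ^ 2 + 4 * (b * c) ≠ 0 := by
      rw [hΔeq]
      exact mul_ne_zero (pow_ne_zero _ ht0) (hsum hrhs)
    obtain ⟨l, hl⟩ := myQuadRoot a (b * c)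
    have h2l : (2 * l - a) ^ 2 = a ^ 2 + 4 * (b * c) := by linear_combination 4 * hl
    have h2l0 : 2 * l - a ≠ 0 := by
      intro h
      apply hΔ
      rw [← h2l, h]
      norm_num
    by_cases hcz : c = 0
    · have hane : a ≠ 0 := by
        intro h
        apply hΔ
        rw [h, hcz]
        ring
      refine myDiagOfConj M !![1, b; 0, -a] !![a, 0; 0, 0] ?_ (myIsDiag22 a 0) ?_
      · rw [Matrix.det_fin_two_of]
        simp only [one_mul, mul_zero, sub_zero]
        exact isUnit_iff_ne_zero.mpr (by simpa using hane)
      · rw [hM, hcz]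
        ext i k
        fin_cases i <;> fin_cases k <;>
          simp [Matrix.mul_apply, Fin.sum_univ_two, -mul_eq_zero, -neg_eq_zero] <;> ring
    · refine myDiagOfConj M !![l, a - l; c, c] !![l, 0; 0, a - l] ?_ (myIsDiag22 l (a - l)) ?_
      · rw [Matrix.det_fin_two_of]
        have heq : l * c - (a - l) * c = (2 * l - a) * c := by ring
        rw [heq]
        exact isUnit_iff_ne_zero.mpr (mul_ne_zero h2l0 hcz)
      · rw [hM]
        ext i k
        fin_cases i <;> fin_cases k <;>
          simp [Matrix.mul_apply, Fin.sum_univ_two, -mul_eq_zero, -neg_eq_zero] <;>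
          first
            | linear_combination hl
            | linear_combination -hl
            | ring
end

section
/- Let F = F_2(t) be the rational function field over the field with 2 elements and let K be an algebraic closure of F. Consider the 4×4 matrix M = [[t, 0, 0, 0], [t, 0, t³, t⁴], [t, t², 0, t⁴], [t, 0, 0, 0]] over F. Then the characteristic polynomial of M equals X·(X+t)·(X²+t⁵), and M is not diagonalizable over K. -/
open Matrix

open Polynomial in
lemma eval_charpoly' {n R : Type*} [Fintype n] [DecidableEq n] [CommRing R]
    (A : Matrix n n R) (r : R) :
    (A.charpoly).eval r = (Matrix.diagonal (fun _ : n => r) - A).det := by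
  rw [Matrix.charpoly, show ((charmatrix A).det).eval r = (evalRingHom r) (charmatrix A).det from rfl,
    RingHom.map_det]
  congr 1
  ext i j
  by_cases h : i = j
  · subst h; simp [charmatrix_apply_eq]
  · simp [charmatrix_apply_ne _ _ _ h, Matrix.diagonal_apply_ne _ h]

open Polynomial in
set_option maxHeartbeats 1000000 in
lemma charpoly_aux :
    (!![RatFunc.X, 0, 0, 0; RatFunc.X, 0, RatFunc.X ^ 3, RatFunc.X ^ 4;
      RatFunc.X, RatFunc.X ^ 2, 0, RatFunc.X ^ 4; RatFunc.X, 0, 0, 0] :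
      Matrix (Fin 4) (Fin 4) (RatFunc (ZMod 2))).charpoly
    = X * (X + C RatFunc.X) * (X ^ 2 + C (RatFunc.X ^ 5)) := by
  set t : RatFunc (ZMod 2) := RatFunc.X with ht
  have h2 : (1 : RatFunc (ZMod 2)) + 1 = 0 := by
    have : (algebraMap (ZMod 2) (RatFunc (ZMod 2))) (1 + 1) = 0 := by
      rw [show (1 + 1 : ZMod 2) = 0 by decide]; simp
    simpa [map_add] using this
  have h2p : (1 : (RatFunc (ZMod 2))[X]) + 1 = 0 := by
    have := congrArg C h2; simpa using this
  rw [Matrix.charpoly]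
  have h : charmatrix (!![t, 0, 0, 0; t, 0, t ^ 3, t ^ 4; t, t ^ 2, 0, t ^ 4; t, 0, 0, 0] :
      Matrix (Fin 4) (Fin 4) (RatFunc (ZMod 2)))
      = !![X - C t, 0, 0, 0; -C t, X, -C (t ^ 3), -C (t ^ 4);
          -C t, -C (t ^ 2), X, -C (t ^ 4); -C t, 0, 0, X] := by
    apply Matrix.ext; intro i j
    fin_cases i <;> fin_cases j <;>
      first
      | (rw [charmatrix_apply_eq]; norm_num [Matrix.vecHead, Matrix.vecTail])
      | (rw [charmatrix_apply_ne _ _ _ (by decide)]; norm_num [Matrix.vecHead, Matrix.vecTail])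
  rw [h]
  rw [Matrix.det_succ_row_zero]
  rw [Fin.sum_univ_four]
  norm_num [Fin.succAbove, Matrix.vecHead, Matrix.vecTail, Matrix.det_fin_three,
    Matrix.submatrix, map_pow]
  simp [Fin.lt_def, Matrix.vecHead, Matrix.vecTail]
  linear_combination (-(X ^ 2 * C t ^ 5) - X ^ 3 * C t) * h2p

/-- The 4×4 matrix of the Atkin operator `U_t` for `q = 2`, `k = 5` has characteristic
polynomial `X(X+t)(X²+t⁵)` and is not diagonalizable over an algebraic closure of
`F₂(t)`. -/
theorem stmt6 (K : Type*) [Field K] [Algebra (RatFunc (ZMod 2)) K]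
    [IsAlgClosure (RatFunc (ZMod 2)) K] :
    let F := RatFunc (ZMod 2)
    let t : F := RatFunc.X
    let M : Matrix (Fin 4) (Fin 4) F :=
      !![t, 0, 0, 0; t, 0, t ^ 3, t ^ 4; t, t ^ 2, 0, t ^ 4; t, 0, 0, 0]
    M.charpoly = Polynomial.X * (Polynomial.X + Polynomial.C t) *
        (Polynomial.X ^ 2 + Polynomial.C (t ^ 5)) ∧
    ¬ Matrix.IsDiagonalizable (M.map (algebraMap F K)) := by
  intro F t M
  refine ⟨charpoly_aux, ?_⟩
  rintro ⟨P, hP, hD⟩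
  set f := algebraMap F K with hf
  have hfinj : Function.Injective f := (algebraMap F K).injective
  set a : K := f t with ha
  have h2 : (1 : F) + 1 = 0 := by
    have : (algebraMap (ZMod 2) F) (1 + 1) = 0 := by
      rw [show (1 + 1 : ZMod 2) = 0 by decide]; simp
    simpa [map_add] using this
  have h2K : (1 : K) + 1 = 0 := by
    have := congrArg f h2; simpa using this
  have ha0 : a ≠ 0 := by
    intro h
    exact RatFunc.X_ne_zero (hfinj (show f t = f 0 by rw [map_zero]; exact h))
  have ht3 : (t : F) ^ 3 ≠ 1 := by
    intro h
    have h' : algebraMap (Polynomial (ZMod 2)) F (Polynomial.X ^ 3)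
        = algebraMap (Polynomial (ZMod 2)) F 1 := by
      rw [map_pow, RatFunc.algebraMap_X, _root_.map_one]
      exact h
    have := IsFractionRing.injective (Polynomial (ZMod 2)) F h'
    simpa using congrArg Polynomial.natDegree this
  -- algebraic closure gives square root of a^5
  haveI : IsAlgClosed K := IsAlgClosure.isAlgClosed F
  obtain ⟨s, hs⟩ := IsAlgClosed.exists_pow_nat_eq (k := K) (a ^ 5) (n := 2) (by norm_num)
  set N : Matrix (Fin 4) (Fin 4) K := M.map f with hN
  have hPdet : IsUnit P.det := (Matrix.isUnit_iff_isUnit_det P).mp hP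
  have hPPinv : P * P⁻¹ = 1 := Matrix.mul_nonsing_inv P hPdet
  have hPinvP : P⁻¹ * P = 1 := Matrix.nonsing_inv_mul P hPdet
  set d : Fin 4 → K := (P⁻¹ * N * P).diag with hd
  have hDdiag : P⁻¹ * N * P = Matrix.diagonal d := (hD.diagonal_diag).symm
  have hNPDP : N = P * Matrix.diagonal d * P⁻¹ := by
    rw [← hDdiag]
    calc N = (P * P⁻¹) * N * (P * P⁻¹) := by rw [hPPinv]; simp [Matrix.one_mul]
    _ = P * (P⁻¹ * N * P) * P⁻¹ := by noncomm_ring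
  -- charpoly of N
  have hcpN : N.charpoly = Polynomial.X * (Polynomial.X + Polynomial.C a) *
      (Polynomial.X ^ 2 + Polynomial.C (a ^ 5)) := by
    rw [hN, Matrix.charpoly_map, charpoly_aux]
    simp [Polynomial.map_mul, Polynomial.map_add, Polynomial.map_pow]
    rfl
  -- each diagonal entry is a root
  have hroot : ∀ i, d i * (d i + a) * (d i + s) = 0 := by
    intro i
    have hev : (N.charpoly).eval (d i) = 0 := by
      rw [eval_charpoly']
      have hc : P * Matrix.diagonal (fun _ : Fin 4 => d i) * P⁻¹
          = Matrix.diagonal (fun _ : Fin 4 => d i) := by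
        rw [← Matrix.smul_one_eq_diagonal, Matrix.mul_smul, Matrix.mul_one,
          Matrix.smul_mul, hPPinv]
      have hdsub : Matrix.diagonal (fun j => d i - d j)
          = Matrix.diagonal (fun _ : Fin 4 => d i) - Matrix.diagonal d := by
        ext j k
        by_cases h : j = k
        · subst h; simp
        · simp [Matrix.diagonal_apply_ne _ h]
      have : Matrix.diagonal (fun _ : Fin 4 => d i) - N
          = P * (Matrix.diagonal (fun j => d i - d j)) * P⁻¹ := by
        rw [hNPDP, hdsub, Matrix.mul_sub, Matrix.sub_mul, hc]
      rw [this, Matrix.det_mul, Matrix.det_mul, Matrix.det_diagonal]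
      have : ∏ j, (d i - d j) = 0 :=
        Finset.prod_eq_zero (Finset.mem_univ i) (sub_self _)
      rw [this]; ring
    rw [hcpN] at hev
    simp only [Polynomial.eval_mul, Polynomial.eval_add, Polynomial.eval_pow,
      Polynomial.eval_X, Polynomial.eval_C] at hev
    have hsq : d i ^ 2 + a ^ 5 = (d i + s) ^ 2 := by
      linear_combination (-(d i * s)) * h2K - hs
    rw [hsq] at hev
    rcases mul_eq_zero.mp hev with h1 | h1
    · rw [h1]; ring
    · rcases pow_eq_zero_iff (n := 2) (by norm_num) |>.mp h1 with h1
      rw [h1]; ring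
  -- the diagonal product vanishes
  have hdiagzero : Matrix.diagonal d * (Matrix.diagonal d + a • (1 : Matrix (Fin 4) (Fin 4) K))
      * (Matrix.diagonal d + s • 1) = 0 := by
    rw [Matrix.smul_one_eq_diagonal, Matrix.smul_one_eq_diagonal, Matrix.diagonal_add,
      Matrix.diagonal_add, Matrix.diagonal_mul_diagonal, Matrix.diagonal_mul_diagonal]
    have : (fun i => d i * (d i + a) * (d i + s)) = fun _ => (0 : K) := by
      funext i; exact hroot i
    calc Matrix.diagonal (fun i => d i * (d i + a) * (d i + s)) = Matrix.diagonal (fun _ => (0:K)) := by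
          rw [this]
      _ = 0 := Matrix.diagonal_zero
  -- hence N's product vanishes
  have hprod : N * (N + a • (1 : Matrix (Fin 4) (Fin 4) K)) * (N + s • 1) = 0 := by
    have hca : ∀ c : K, N + c • (1 : Matrix (Fin 4) (Fin 4) K)
        = P * (Matrix.diagonal d + c • 1) * P⁻¹ := by
      intro c
      rw [hNPDP, Matrix.mul_add, Matrix.add_mul]
      congr 1
      rw [Matrix.mul_smul, Matrix.mul_one, Matrix.smul_mul, hPPinv]
    rw [hca, hca, hNPDP]
    calc P * Matrix.diagonal d * P⁻¹ * (P * (Matrix.diagonal d + a • 1) * P⁻¹)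
        * (P * (Matrix.diagonal d + s • 1) * P⁻¹)
        = P * (Matrix.diagonal d * (Matrix.diagonal d + a • 1) * (Matrix.diagonal d + s • 1)) * P⁻¹ := by
          rw [show ∀ A B C : Matrix (Fin 4) (Fin 4) K, P * A * P⁻¹ * (P * B * P⁻¹) * (P * C * P⁻¹)
            = P * (A * (P⁻¹ * P) * B * (P⁻¹ * P) * C) * P⁻¹ from fun A B C => by noncomm_ring]
          rw [hPinvP]
          simp [Matrix.mul_one]
      _ = 0 := by rw [hdiagzero]; simp
  -- but the (1,1) entry is nonzero
  have h11 := congrFun (congrFun hprod 1) 1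
  simp only [Matrix.mul_apply, Fin.sum_univ_four, Matrix.add_apply, Matrix.smul_apply,
    Matrix.one_apply, Matrix.zero_apply, N, M, Matrix.map_apply, map_pow, map_zero,
    Matrix.cons_val', Matrix.cons_val_zero, Matrix.cons_val_one, Matrix.head_cons,
    Matrix.head_fin_const, Matrix.empty_val', Matrix.cons_val_fin_one,
    Matrix.vecHead, Matrix.vecTail, smul_eq_mul] at h11
  simp [Matrix.vecHead, Matrix.vecTail] at h11
  have hsa : s * a ^ 5 = a * a ^ 5 := by linear_combination h11 - a ^ 6 * h2K
  have hsa2 : s = a := mul_right_cancel₀ (pow_ne_zero 5 ha0) hsa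
  rw [hsa2] at hs
  have hz : a ^ 2 * (a ^ 3 - 1) = 0 := by linear_combination -hs
  have ha3 : a ^ 3 = 1 := by
    rcases mul_eq_zero.mp hz with h | h
    · exact absurd (pow_eq_zero_iff (by norm_num : (2:ℕ) ≠ 0) |>.mp h) ha0
    · linear_combination h
  exact ht3 (hfinj (show f (t ^ 3) = f 1 by rw [map_pow, _root_.map_one]; exact ha3))
end

section
/- Let p be a prime, r ≥ 1 an integer, q = p^r, and let F = F_q(t) be the rational function field over the field with q elements. The 3×3 matrix M = [[t, 0, 0], [t, t^q, −t^{2q−1}], [t, 0, 0]] over F is similar over F to the diagonal matrix diag(t^q, t, 0); eigenvectors for the eigenvalues t^q, t, 0 are (0,1,0), (1, 1+t^{q−1}, 1) and (0, t^{q−1}, 1) respectively. In particular M is diagonalizable over F. -/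
open Matrix

set_option synthInstance.maxHeartbeats 1000000
set_option maxHeartbeats 1000000

/-- The 3×3 block of the Atkin operator `U_t` on the class `C₀` for weight `k = 2q` is
similar over `F_q(t)` to `diag(t^q, t, 0)`, with the indicated eigenvectors; in
particular it is diagonalizable over `F_q(t)`. -/
theorem stmt7 (p r : ℕ) [Fact p.Prime] (hr : 1 ≤ r) (q : ℕ) (hq : q = p ^ r) :
    let F := RatFunc (GaloisField p r)
    let t : F := RatFunc.X
    let M : Matrix (Fin 3) (Fin 3) F := !![t, 0, 0; t, t ^ q, -t ^ (2 * q - 1); t, 0, 0]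
    (∃ P : Matrix (Fin 3) (Fin 3) F, IsUnit P ∧
      Matrix.diagonal ![t ^ q, t, 0] = P⁻¹ * M * P) ∧
    M *ᵥ ![0, 1, 0] = t ^ q • (![0, 1, 0] : Fin 3 → F) ∧
    M *ᵥ ![1, 1 + t ^ (q - 1), 1] = t • (![1, 1 + t ^ (q - 1), 1] : Fin 3 → F) ∧
    M *ᵥ ![0, t ^ (q - 1), 1] = 0 ∧
    Matrix.IsDiagonalizable M := by
  intro F t M
  have hq1 : 1 ≤ q := by
    subst hq; exact Nat.one_le_pow _ _ (Fact.out (p := p.Prime)).pos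
  have ht1 : t ^ q = t ^ (q - 1) * t := by
    rw [← pow_succ, Nat.sub_add_cancel hq1]
  have ht2 : t ^ (2 * q - 1) = t ^ q * t ^ (q - 1) := by
    rw [← pow_add]
    congr 1
    omega
  set s : F := t ^ (q - 1) with hs
  set P : Matrix (Fin 3) (Fin 3) F := !![0, 1, 0; 1, 1 + s, s; 0, 1, 1] with hP
  have hdet : P.det = -1 := by
    simp [hP, Matrix.det_fin_three]
  have hPunit : IsUnit P := by
    apply (Matrix.isUnit_iff_isUnit_det P).mpr
    rw [hdet]
    exact isUnit_one.neg
  have hMP : M * P = P * Matrix.diagonal ![t ^ q, t, 0] := by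
    ext i j
    fin_cases i <;> fin_cases j <;>
      simp [hP, M, Matrix.mul_apply, Fin.sum_univ_three, Matrix.diagonal, ht1, ht2, ← hs] <;>
      ring
  have hD : Matrix.diagonal ![t ^ q, t, 0] = P⁻¹ * M * P := by
    rw [Matrix.mul_assoc, hMP, ← Matrix.mul_assoc,
      Matrix.nonsing_inv_mul P ((Matrix.isUnit_iff_isUnit_det P).mp hPunit), Matrix.one_mul]
  refine ⟨⟨P, hPunit, hD⟩, ?_, ?_, ?_, ⟨P, hPunit, ?_⟩⟩
  · funext i
    fin_cases i <;> simp [M, Matrix.mulVec, dotProduct, Fin.sum_univ_three]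
  · funext i
    fin_cases i <;>
      simp [M, Matrix.mulVec, dotProduct, Fin.sum_univ_three, ht1, ht2, ← hs] <;>
      ring
  · funext i
    fin_cases i <;>
      simp [M, Matrix.mulVec, dotProduct, Fin.sum_univ_three, ht1, ht2, ← hs] <;>
      ring
  · rw [← hD]
    intro i j hij
    fin_cases i <;> fin_cases j <;> simp_all [Matrix.diagonal]
end
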